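/- For a truncated path algebra Λ, a semisimple sequence (S_0,...,S_L) is realizable if and only if each two-term sequence (S_l, S_{l+1}) is realizable over Λ/J² for every 0 ≤ l ≤ L-1. -/

import Mathlib

open Matrix

section Framework

variable {K : Type*} [Field K] {n : ℕ}

/-- Paths in a quiver on vertices `Fin n` with `B i j` arrows from `i` to `j`. -/
inductive QPath (B : Fin n → Fin n → ℕ) : Fin n → Fin n → Type
  | nil (i : Fin n) : QPath B i i
  | cons {i j k : Fin n} (p : QPath B i j) (a : Fin (B j k)) : QPath B i k

/-- Length of a path. -/
def QPath.length {B : Fin n → Fin n → ℕ} : ∀ {i j : Fin n}, QPath B i j → ℕ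
  | _, _, .nil _ => 0
  | _, _, .cons p _ => p.length + 1

variable (K n) in
/-- A point of the representation space with dimension vector `d`. -/
abbrev RepPt (B : Fin n → Fin n → ℕ) (d : Fin n → ℕ) : Type _ :=
  ∀ i j : Fin n, Fin (B i j) → Matrix (Fin (d j)) (Fin (d i)) K

variable {B : Fin n → Fin n → ℕ} {d : Fin n → ℕ}

/-- The matrix by which a path acts under a representation point. -/
def evalPath (x : RepPt K n B d) : ∀ {i j : Fin n}, QPath B i j → Matrix (Fin (d j)) (Fin (d i)) K
  | _, _, .nil _ => 1
  | _, _, .cons p a => x _ _ a * evalPath x p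

/-- Membership in the representation variety of the truncated path algebra of Loewy length
`L+1`: all paths of length `L+1` act by zero. -/
def InRepTrunc (L : ℕ) (x : RepPt K n B d) : Prop :=
  ∀ (i j : Fin n) (p : QPath B i j), QPath.length p = L + 1 → evalPath x p = 0

/-- Evaluation of a formal `K`-linear combination of parallel paths. -/
noncomputable def evalRel (x : RepPt K n B d) {i j : Fin n} (r : QPath B i j →₀ K) :
    Matrix (Fin (d j)) (Fin (d i)) K :=
  r.sum fun p c => c • evalPath x p

/-- Membership in the representation variety of `KQ/I`, for a family `I` of relations. -/
def InRep (I : ∀ i j : Fin n, Set (QPath B i j →₀ K)) (x : RepPt K n B d) : Prop :=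
  ∀ i j : Fin n, ∀ r ∈ I i j, evalRel x r = 0

/-- The radical series of a subrepresentation `W` (for `W = ⊤`, of the module `M_x`):
`radSerIn x W (l+1)` is spanned by the images of `radSerIn x W l` under the arrows. -/
def radSerIn (x : RepPt K n B d) (W : ∀ i : Fin n, Submodule K (Fin (d i) → K)) :
    ℕ → ∀ i : Fin n, Submodule K (Fin (d i) → K)
  | 0 => W
  | l + 1 => fun j =>
      ⨆ (i : Fin n) (a : Fin (B i j)),
        Submodule.map (Matrix.mulVecLin (x i j a)) (radSerIn x W l i)

/-- The module carried by the subrepresentation `W` of `M_x` has a filtration governed by the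
semisimple sequence `S` (semisimple sequences are recorded by their dimension vectors). -/
def GovernedFiltOn (L : ℕ) (x : RepPt K n B d) (W : ∀ i : Fin n, Submodule K (Fin (d i) → K))
    (S : Fin (L + 1) → Fin n → ℕ) : Prop :=
  ∃ F : Fin (L + 2) → ∀ i : Fin n, Submodule K (Fin (d i) → K),
    (∀ i, F 0 i = W i) ∧ (∀ i, F (Fin.last (L + 1)) i = ⊥) ∧
    (∀ (l : Fin (L + 1)) (i : Fin n), F l.succ i ≤ F l.castSucc i) ∧
    (∀ (l : Fin (L + 1)) (i j : Fin n) (a : Fin (B i j)),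
      Submodule.map (Matrix.mulVecLin (x i j a)) (F l.castSucc i) ≤ F l.succ j) ∧
    (∀ (l : Fin (L + 1)) (i : Fin n),
      Module.finrank K ↥(F l.castSucc i) = Module.finrank K ↥(F l.succ i) + S l i)

/-- The module `M_x` has a filtration governed by `S`. -/
def GovernedFilt (L : ℕ) (x : RepPt K n B d) (S : Fin (L + 1) → Fin n → ℕ) : Prop :=
  GovernedFiltOn L x (fun _ => ⊤) S

/-- The subrepresentation `W` of `M_x` has radical layering `S`. -/
def HasRadLayeringOn (L : ℕ) (x : RepPt K n B d) (W : ∀ i : Fin n, Submodule K (Fin (d i) → K))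
    (S : Fin (L + 1) → Fin n → ℕ) : Prop :=
  (∀ i : Fin n, radSerIn x W (L + 1) i = ⊥) ∧
  ∀ (l : Fin (L + 1)) (i : Fin n),
    Module.finrank K ↥(radSerIn x W (l : ℕ) i) = ∑ j ∈ Finset.Ici l, S j i

/-- The module `M_x` has radical layering `S`. -/
def HasRadLayering (L : ℕ) (x : RepPt K n B d) (S : Fin (L + 1) → Fin n → ℕ) : Prop :=
  HasRadLayeringOn L x (fun _ => ⊤) S

/-- The dominance order on semisimple sequences. -/
def DomLE {L : ℕ} (S T : Fin (L + 1) → Fin n → ℕ) : Prop :=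
  ∀ (l : Fin (L + 1)) (i : Fin n), ∑ j ∈ Finset.Iic l, S j i ≤ ∑ j ∈ Finset.Iic l, T j i

variable (K) in
/-- Realizability of a semisimple sequence over the truncated path algebra. -/
def Realizable (L : ℕ) (B : Fin n → Fin n → ℕ) (S : Fin (L + 1) → Fin n → ℕ) : Prop :=
  ∃ x : RepPt K n B (fun i => ∑ l, S l i), InRepTrunc L x ∧ HasRadLayering L x S

/-- Realizability of a semisimple sequence over `KQ/I`. -/
def RealizableRel (I : ∀ i j : Fin n, Set (QPath B i j →₀ K)) (L : ℕ)
    (S : Fin (L + 1) → Fin n → ℕ) : Prop :=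
  ∃ x : RepPt K n B (fun i => ∑ l, S l i), InRep I x ∧ HasRadLayering L x S

/-- Coordinates of the affine space of representation points. -/
abbrev CoordIx (n : ℕ) (B : Fin n → Fin n → ℕ) (d : Fin n → ℕ) : Type :=
  Σ i : Fin n, Σ j : Fin n, Fin (B i j) × Fin (d j) × Fin (d i)

def coords (x : RepPt K n B d) : CoordIx n B d → K :=
  fun c => x c.1 c.2.1 c.2.2.1 c.2.2.2.1 c.2.2.2.2

/-- Zariski-closed subsets of the affine space of representation points. -/
def ZClosed (Z : Set (RepPt K n B d)) : Prop :=
  ∃ P : Set (MvPolynomial (CoordIx n B d) K),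
    Z = {x | ∀ f ∈ P, MvPolynomial.eval (coords x) f = 0}

/-- `T` is Zariski-closed in the subvariety `V`. -/
def ZClosedIn (V T : Set (RepPt K n B d)) : Prop :=
  ∃ Z : Set (RepPt K n B d), ZClosed Z ∧ T = V ∩ Z

/-- The Zariski closure of `C` inside `V`. -/
def ZClosureIn (V C : Set (RepPt K n B d)) : Set (RepPt K n B d) :=
  {x | x ∈ V ∧ ∀ Z : Set (RepPt K n B d), ZClosed Z → C ⊆ Z → x ∈ Z}

/-- Irreducibility of a subset in the Zariski topology. -/
def ZIrred (C : Set (RepPt K n B d)) : Prop :=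
  C.Nonempty ∧ ∀ Z₁ Z₂ : Set (RepPt K n B d), ZClosed Z₁ → ZClosed Z₂ →
    C ⊆ Z₁ ∪ Z₂ → C ⊆ Z₁ ∨ C ⊆ Z₂

/-- `C` is an irreducible component (a maximal irreducible subset) of `V`. -/
def IsIrredComponentOf (V C : Set (RepPt K n B d)) : Prop :=
  ZIrred C ∧ C ⊆ V ∧ ∀ C' : Set (RepPt K n B d), ZIrred C' → C' ⊆ V → C ⊆ C' → C' = C

/-- The triangularity conditions (i) and (ii) on a representation point, relative to a
decomposition `C` of the spaces at the vertices. -/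
def Triangular (L : ℕ) (x : RepPt K n B d)
    (C : Fin (L + 1) → ∀ i : Fin n, Submodule K (Fin (d i) → K)) : Prop :=
  ∀ (l : Fin (L + 1)) (i j : Fin n) (a : Fin (B i j)),
    Submodule.map (Matrix.mulVecLin (x i j a)) (C l i) ≤ ⨆ (m : Fin (L + 1)) (_ : l < m), C m j

/-- `C` is a decomposition of `K^d` induced by the semisimple sequence `S`. -/
def IsInducedDecomp (L : ℕ) (d : Fin n → ℕ) (S : Fin (L + 1) → Fin n → ℕ)
    (C : Fin (L + 1) → ∀ i : Fin n, Submodule K (Fin (d i) → K)) : Prop :=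
  (∀ i : Fin n, (⨆ l : Fin (L + 1), C l i) = ⊤) ∧
  (∀ (l : Fin (L + 1)) (i : Fin n), Module.finrank K ↥(C l i) = S l i) ∧
  (∀ i : Fin n, ∑ l : Fin (L + 1), S l i = d i)

end Framework

section RankAux

variable {K : Type*} [Field K]

lemma aux_finrank_map_add {V V' : Type*} [AddCommGroup V] [Module K V] [AddCommGroup V']
    [Module K V'] [FiniteDimensional K V] (f : V →ₗ[K] V') (A : Submodule K V) :
    Module.finrank K ↥(Submodule.map f A) + Module.finrank K ↥(A ⊓ LinearMap.ker f) =
      Module.finrank K ↥A := by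
  have h1 := LinearMap.finrank_range_add_finrank_ker (f ∘ₗ A.subtype)
  rw [LinearMap.range_comp, Submodule.range_subtype, LinearMap.ker_comp] at h1
  have h2 : Module.finrank K ↥(Submodule.comap A.subtype (LinearMap.ker f)) =
      Module.finrank K ↥(A ⊓ LinearMap.ker f) := by
    rw [← Submodule.map_comap_subtype A (LinearMap.ker f)]
    exact (Submodule.equivMapOfInjective A.subtype A.injective_subtype _).finrank_eq
  rw [h2] at h1
  exact h1

lemma aux_finrank_iSup_le {V : Type*} [AddCommGroup V] [Module K V] [FiniteDimensional K V]
    {ι : Type*} [Fintype ι] (f : ι → Submodule K V) :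
    Module.finrank K ↥(⨆ i, f i) ≤ ∑ i, Module.finrank K ↥(f i) := by
  classical
  have key : ∀ s : Finset ι, Module.finrank K ↥(s.sup f) ≤ ∑ i ∈ s, Module.finrank K ↥(f i) := by
    intro s
    induction s using Finset.induction_on with
    | empty => simp
    | insert a s ha ih =>
      rw [Finset.sup_insert, Finset.sum_insert ha]
      have h3 := Submodule.finrank_sup_add_finrank_inf_eq (f a) (s.sup f)
      omega
  have h2 : (⨆ i, f i) = Finset.univ.sup f := by
    rw [Finset.sup_eq_iSup]
    simp
  rw [h2]
  simpa using key Finset.univ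

end RankAux
section Necessity

variable {K : Type*} [Field K] {n : ℕ} {B : Fin n → Fin n → ℕ} {d : Fin n → ℕ}

lemma radSer_succ (x : RepPt K n B d) (W : ∀ i : Fin n, Submodule K (Fin (d i) → K)) (m : ℕ)
    (j : Fin n) : radSerIn x W (m + 1) j =
      ⨆ (i : Fin n) (a : Fin (B i j)),
        Submodule.map (Matrix.mulVecLin (x i j a)) (radSerIn x W m i) := rfl

lemma map_radSer_le (x : RepPt K n B d) (W : ∀ i : Fin n, Submodule K (Fin (d i) → K)) (m : ℕ)
    (i j : Fin n) (a : Fin (B i j)) :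
    Submodule.map (Matrix.mulVecLin (x i j a)) (radSerIn x W m i) ≤ radSerIn x W (m + 1) j := by
  rw [radSer_succ]
  exact le_iSup_of_le i (le_iSup_of_le a le_rfl)

lemma radSer_antitone (x : RepPt K n B d) :
    ∀ (m : ℕ) (i : Fin n), radSerIn x (fun _ => ⊤) (m + 1) i ≤ radSerIn x (fun _ => ⊤) m i := by
  intro m
  induction m with
  | zero => intro i; exact le_top
  | succ m ih =>
    intro j
    rw [radSer_succ, radSer_succ]
    exact iSup_mono fun i => iSup_mono fun a => Submodule.map_mono (ih i)

/-- The key numerical inequality extracted from a radical layering. -/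
lemma numeric_of_layering (x : RepPt K n B d) (S0 S1 : Fin n → ℕ) (l : ℕ)
    (hA : ∀ i, Module.finrank K ↥(radSerIn x (fun _ => ⊤) l i) =
      S0 i + Module.finrank K ↥(radSerIn x (fun _ => ⊤) (l + 1) i))
    (j : Fin n)
    (hB : Module.finrank K ↥(radSerIn x (fun _ => ⊤) (l + 1) j) =
      S1 j + Module.finrank K ↥(radSerIn x (fun _ => ⊤) (l + 2) j)) :
    S1 j ≤ ∑ i, B i j * S0 i := by
  classical
  set R : ℕ → ∀ i : Fin n, Submodule K (Fin (d i) → K) := radSerIn x (fun _ => ⊤) with hR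
  set π : (Fin (d j) → K) →ₗ[K] _ := (R (l + 2) j).mkQ with hπ
  -- Step a
  have ha := aux_finrank_map_add π (R (l + 1) j)
  have hker : R (l + 1) j ⊓ LinearMap.ker π = R (l + 2) j := by
    rw [hπ, Submodule.ker_mkQ]
    exact inf_eq_right.mpr (radSer_antitone x (l + 1) j)
  rw [hker, hB] at ha
  have haS : Module.finrank K ↥(Submodule.map π (R (l + 1) j)) = S1 j := by omega
  -- Step b
  have hb : Submodule.map π (R (l + 1) j) =
      ⨆ (i : Fin n) (a : Fin (B i j)),
        Submodule.map (π ∘ₗ Matrix.mulVecLin (x i j a)) (R l i) := by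
    rw [show R (l + 1) j = ⨆ (i : Fin n) (a : Fin (B i j)),
          Submodule.map (Matrix.mulVecLin (x i j a)) (R l i) from rfl]
    rw [Submodule.map_iSup]
    refine iSup_congr fun i => ?_
    rw [Submodule.map_iSup]
    refine iSup_congr fun a => ?_
    rw [Submodule.map_comp]
  -- Step c : each summand has finrank ≤ S0 i
  have hc : ∀ (i : Fin n) (a : Fin (B i j)),
      Module.finrank K ↥(Submodule.map (π ∘ₗ Matrix.mulVecLin (x i j a)) (R l i)) ≤ S0 i := by
    intro i a
    have h1 := aux_finrank_map_add (π ∘ₗ Matrix.mulVecLin (x i j a)) (R l i)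
    have h2 : R (l + 1) i ≤ R l i ⊓ LinearMap.ker (π ∘ₗ Matrix.mulVecLin (x i j a)) := by
      refine le_inf (radSer_antitone x l i) ?_
      intro v hv
      have hxv : (Matrix.mulVecLin (x i j a)) v ∈ R (l + 2) j :=
        map_radSer_le x (fun _ => ⊤) (l + 1) i j a ⟨v, hv, rfl⟩
      simp only [LinearMap.mem_ker, LinearMap.comp_apply, hπ, Submodule.mkQ_apply]
      rwa [Submodule.Quotient.mk_eq_zero]
    have h3 := Submodule.finrank_mono h2
    have h4 := hA i
    omega
  rw [hb] at haS
  rw [← haS]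
  calc Module.finrank K ↥(⨆ (i : Fin n) (a : Fin (B i j)),
        Submodule.map (π ∘ₗ Matrix.mulVecLin (x i j a)) (R l i))
      ≤ ∑ i, Module.finrank K ↥(⨆ (a : Fin (B i j)),
          Submodule.map (π ∘ₗ Matrix.mulVecLin (x i j a)) (R l i)) :=
        aux_finrank_iSup_le _
    _ ≤ ∑ i, B i j * S0 i := by
        refine Finset.sum_le_sum fun i _ => ?_
        calc Module.finrank K ↥(⨆ (a : Fin (B i j)),
              Submodule.map (π ∘ₗ Matrix.mulVecLin (x i j a)) (R l i))
            ≤ ∑ a : Fin (B i j), Module.finrank K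
                ↥(Submodule.map (π ∘ₗ Matrix.mulVecLin (x i j a)) (R l i)) :=
              aux_finrank_iSup_le _
          _ ≤ ∑ _a : Fin (B i j), S0 i := Finset.sum_le_sum fun a _ => hc i a
          _ = B i j * S0 i := by simp [Finset.sum_const, mul_comm]

end Necessity
section Layer

variable {K : Type*} [Field K] {n : ℕ} {B : Fin n → Fin n → ℕ} {d : Fin n → ℕ}

lemma layer_step {L : ℕ} (x : RepPt K n B d) (S : Fin (L + 1) → Fin n → ℕ)
    (hx : HasRadLayering L x S) (m : ℕ) (hm : m < L + 1) (i : Fin n) :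
    Module.finrank K ↥(radSerIn x (fun _ => ⊤) m i) =
      S ⟨m, hm⟩ i + Module.finrank K ↥(radSerIn x (fun _ => ⊤) (m + 1) i) := by
  have h1 := hx.2 ⟨m, hm⟩ i
  by_cases hm' : m + 1 < L + 1
  · have h2 := hx.2 ⟨m + 1, hm'⟩ i
    have hins : Finset.Ici (⟨m, hm⟩ : Fin (L + 1)) =
        insert (⟨m, hm⟩ : Fin (L + 1)) (Finset.Ici (⟨m + 1, hm'⟩ : Fin (L + 1))) := by
      ext p
      simp only [Finset.mem_Ici, Finset.mem_insert, Fin.le_def, Fin.ext_iff]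
      omega
    have hnot : (⟨m, hm⟩ : Fin (L + 1)) ∉ Finset.Ici (⟨m + 1, hm'⟩ : Fin (L + 1)) := by
      simp [Finset.mem_Ici, Fin.le_def]
    rw [hins, Finset.sum_insert hnot] at h1
    simp only [Fin.val_mk] at h1 h2
    omega
  · have hmL : m = L := by omega
    have hbot : radSerIn x (fun _ => ⊤) (m + 1) i = ⊥ := by
      have := hx.1 i
      rw [show m + 1 = L + 1 by omega]
      exact this
    have hsing : Finset.Ici (⟨m, hm⟩ : Fin (L + 1)) = {⟨m, hm⟩} := by
      ext p
      simp only [Finset.mem_Ici, Finset.mem_singleton, Fin.le_def, Fin.ext_iff]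
      omega
    rw [hsing, Finset.sum_singleton] at h1
    rw [hbot, h1]
    simp
end Layer

section NumOfReal

variable {K : Type*} [Field K] {n : ℕ}

lemma numeric_of_realizable {L : ℕ} {B : Fin n → Fin n → ℕ} {S : Fin (L + 1) → Fin n → ℕ}
    (h : Realizable K L B S) (l : Fin L) (j : Fin n) :
    S l.succ j ≤ ∑ i, B i j * S l.castSucc i := by
  obtain ⟨x, -, hx⟩ := h
  refine numeric_of_layering x (S l.castSucc) (S l.succ) l.1 ?_ j ?_
  · intro i
    exact layer_step x S hx l.1 (by omega) i
  · exact layer_step x S hx (l.1 + 1) (by omega) j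

end NumOfReal
section Cons

variable {K : Type*} [Field K] {n L : ℕ} {B : Fin n → Fin n → ℕ}
variable (S : Fin (L + 1) → Fin n → ℕ)

/-- Identification of the coordinate set with a disjoint union of blocks. -/
noncomputable def consE (i : Fin n) : (Σ l : Fin (L + 1), Fin (S l i)) ≃ Fin (∑ l, S l i) :=
  Fintype.equivFinOfCardEq (by simp)

variable (u : ∀ (l : Fin L) (j : Fin n),
  Fin (S l.succ j) ↪ Σ i : Fin n, Fin (B i j) × Fin (S l.castSucc i))

open Classical in
/-- Column of the constructed matrix for arrow `a : i → j` at coordinate `c`. -/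
noncomputable def consCol (i j : Fin n) (a : Fin (B i j)) (c : Fin (∑ l, S l i)) :
    Fin (∑ l, S l j) → K :=
  ∑ l : Fin L, ∑ t : Fin (S l.succ j),
    if (⟨(u l j t).1, (u l j t).2.1, ⟨l.castSucc, (u l j t).2.2⟩⟩ :
          Σ i' : Fin n, Fin (B i' j) × Σ m : Fin (L + 1), Fin (S m i')) =
        ⟨i, a, (consE S i).symm c⟩ then
      Pi.single (consE S j ⟨l.succ, t⟩) (1 : K)
    else 0

/-- The constructed representation point. -/
noncomputable def consX : RepPt K n B (fun i => ∑ l, S l i) :=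
  fun i j a => Matrix.of fun r c => consCol S u i j a c r

lemma consX_single (i j : Fin n) (a : Fin (B i j)) (c : Fin (∑ l, S l i)) :
    Matrix.mulVecLin (consX (K := K) S u i j a) (Pi.single c 1) = consCol (K := K) S u i j a c := by
  funext r
  simp [consX, Matrix.mulVecLin_apply, Matrix.mulVec_single]

/-- Span of the coordinate vectors lying in blocks of index `≥ m`. -/
noncomputable def consD (m : ℕ) (i : Fin n) : Submodule K (Fin (∑ l, S l i) → K) :=
  Submodule.span K
    ((fun c => Pi.single c (1 : K)) '' {c | m ≤ ((((consE S i).symm c).1 : ℕ))})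

lemma consD_mono {m m' : ℕ} (h : m ≤ m') (i : Fin n) : consD (K := K) S m' i ≤ consD S m i :=
  Submodule.span_mono (Set.image_mono fun c hc => le_trans h hc)

lemma consD_zero (i : Fin n) : consD (K := K) S 0 i = ⊤ := by
  have h1 : {c : Fin (∑ l, S l i) | 0 ≤ ((((consE S i).symm c).1 : ℕ))} = Set.univ := by
    ext c; simp
  rw [consD, h1, Set.image_univ]
  have h2 : (fun c : Fin (∑ l, S l i) => Pi.single c (1 : K)) =
      ⇑(Pi.basisFun K (Fin (∑ l, S l i))) := by
    funext c
    simp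
  rw [h2, Module.Basis.span_eq]

lemma consD_bot {m : ℕ} (h : L + 1 ≤ m) (i : Fin n) : consD (K := K) S m i = ⊥ := by
  have h1 : {c : Fin (∑ l, S l i) | m ≤ ((((consE S i).symm c).1 : ℕ))} = ∅ := by
    ext c
    simp only [Set.mem_setOf_eq, Set.mem_empty_iff_false, iff_false, not_le]
    exact lt_of_lt_of_le (((consE S i).symm c).1.isLt) h
  rw [consD, h1, Set.image_empty, Submodule.span_empty]

lemma consD_single_mem {m : ℕ} {i : Fin n} (p : Σ l : Fin (L + 1), Fin (S l i))
    (hp : m ≤ (p.1 : ℕ)) : Pi.single (consE S i p) (1 : K) ∈ consD S m i := by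
  apply Submodule.subset_span
  exact ⟨consE S i p, by simp [hp], rfl⟩

end Cons
section Cons2

variable {K : Type*} [Field K] {n L : ℕ} {B : Fin n → Fin n → ℕ}
variable (S : Fin (L + 1) → Fin n → ℕ)
variable (u : ∀ (l : Fin L) (j : Fin n),
  Fin (S l.succ j) ↪ Σ i : Fin n, Fin (B i j) × Fin (S l.castSucc i))

lemma consCol_mem (i j : Fin n) (a : Fin (B i j)) (c : Fin (∑ l, S l i)) :
    consCol (K := K) S u i j a c ∈ consD S ((((consE S i).symm c).1 : ℕ) + 1) j := by
  rw [consCol]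
  refine Submodule.sum_mem _ fun l _ => Submodule.sum_mem _ fun t _ => ?_
  split_ifs with h
  · have h1 : l.castSucc = ((consE S i).symm c).1 :=
      congrArg (fun q : Σ i' : Fin n, Fin (B i' j) × Σ m : Fin (L + 1), Fin (S m i') =>
        q.2.2.1) h
    refine consD_single_mem S _ ?_
    simp only [← h1, Fin.coe_castSucc, Fin.val_succ, le_refl]
  · exact Submodule.zero_mem _

lemma consCol_u (l : Fin L) (j : Fin n) (t : Fin (S l.succ j)) :
    consCol (K := K) S u (u l j t).1 j (u l j t).2.1
        (consE S (u l j t).1 ⟨l.castSucc, (u l j t).2.2⟩) =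
      Pi.single (consE S j ⟨l.succ, t⟩) 1 := by
  rw [consCol]
  rw [Finset.sum_eq_single l]
  · rw [Finset.sum_eq_single t]
    · rw [if_pos]
      rw [Equiv.symm_apply_apply]
    · intro t' _ ht'
      rw [if_neg]
      rw [Equiv.symm_apply_apply]
      intro hcon
      apply ht'
      apply (u l j).injective
      have h1 : (⟨(u l j t').1, (u l j t').2.1, ⟨l.castSucc, (u l j t').2.2⟩⟩ :
          Σ i' : Fin n, Fin (B i' j) × Σ m : Fin (L + 1), Fin (S m i')) =
          ⟨(u l j t).1, (u l j t).2.1, ⟨l.castSucc, (u l j t).2.2⟩⟩ := hcon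
      -- extract equality of the embedded data
      set q' := u l j t' with hq'
      set q := u l j t with hq
      clear_value q' q
      obtain ⟨i1, a1, s1⟩ := q'
      obtain ⟨i2, a2, s2⟩ := q
      simp only [Sigma.mk.inj_iff, Prod.mk.injEq] at h1 ⊢
      obtain ⟨rfl, h2⟩ := h1
      rw [heq_eq_eq, Prod.mk.injEq] at h2
      obtain ⟨rfl, h3⟩ := h2
      simp only [Sigma.mk.inj_iff] at h3
      obtain ⟨-, h4⟩ := h3
      rw [heq_eq_eq] at h4
      exact ⟨rfl, heq_of_eq (by rw [h4])⟩
    · intro h; exact absurd (Finset.mem_univ t) h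
  · intro l' _ hl'
    refine Finset.sum_eq_zero fun t' _ => ?_
    rw [if_neg]
    rw [Equiv.symm_apply_apply]
    intro hcon
    apply hl'
    have h1 : Fin.castSucc l' = Fin.castSucc l :=
      congrArg (fun q : Σ i' : Fin n, Fin (B i' j) × Σ m : Fin (L + 1), Fin (S m i') =>
        q.2.2.1) hcon
    exact Fin.castSucc_injective _ h1
  · intro h; exact absurd (Finset.mem_univ l) h

end Cons2
section Cons3

variable {K : Type*} [Field K] {n L : ℕ} {B : Fin n → Fin n → ℕ}
variable (S : Fin (L + 1) → Fin n → ℕ)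
variable (u : ∀ (l : Fin L) (j : Fin n),
  Fin (S l.succ j) ↪ Σ i : Fin n, Fin (B i j) × Fin (S l.castSucc i))

lemma consD_map_le (m : ℕ) (i j : Fin n) (a : Fin (B i j)) :
    Submodule.map (Matrix.mulVecLin (consX (K := K) S u i j a)) (consD S m i) ≤
      consD S (m + 1) j := by
  rw [consD, Submodule.map_span]
  rw [Submodule.span_le]
  rintro - ⟨-, ⟨c, hc, rfl⟩, rfl⟩
  rw [consX_single]
  exact consD_mono S (by exact Nat.add_le_add_right hc 1) j (consCol_mem S u i j a c)

lemma consD_le_iSup (m : ℕ) (j : Fin n) :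
    consD (K := K) S (m + 1) j ≤
      ⨆ (i : Fin n) (a : Fin (B i j)),
        Submodule.map (Matrix.mulVecLin (consX (K := K) S u i j a)) (consD S m i) := by
  rw [consD, Submodule.span_le]
  rintro - ⟨c, hc, rfl⟩
  simp only [Set.mem_setOf_eq] at hc
  obtain ⟨q, rfl⟩ : ∃ q, consE S j q = c := ⟨(consE S j).symm c, Equiv.apply_symm_apply _ _⟩
  rw [Equiv.symm_apply_apply] at hc
  obtain ⟨m', t⟩ := q
  replace hc : m + 1 ≤ (m' : ℕ) := hc
  obtain ⟨l, rfl⟩ : ∃ l : Fin L, l.succ = m' := by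
    refine ⟨⟨(m' : ℕ) - 1, by omega⟩, ?_⟩
    ext
    simp only [Fin.val_succ]
    omega
  have hmem : Pi.single (consE S (u l j t).1 ⟨l.castSucc, (u l j t).2.2⟩) (1 : K) ∈
      consD S m (u l j t).1 := by
    refine consD_single_mem S _ ?_
    simp only [Fin.coe_castSucc]
    have : (l.succ : ℕ) = (l : ℕ) + 1 := rfl
    omega
  have hx : Matrix.mulVecLin (consX (K := K) S u (u l j t).1 j (u l j t).2.1)
      (Pi.single (consE S (u l j t).1 ⟨l.castSucc, (u l j t).2.2⟩) 1) =
      Pi.single (consE S j ⟨l.succ, t⟩) 1 := by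
    rw [consX_single, consCol_u]
  refine Submodule.mem_iSup_of_mem (u l j t).1 ?_
  refine Submodule.mem_iSup_of_mem (u l j t).2.1 ?_
  exact ⟨_, hmem, hx⟩

lemma consRadSer (m : ℕ) (j : Fin n) :
    radSerIn (consX (K := K) S u) (fun _ => ⊤) m j = consD S m j := by
  induction m generalizing j with
  | zero => exact (consD_zero S j).symm
  | succ m ih =>
    rw [radSer_succ]
    refine le_antisymm ?_ ?_
    · refine iSup_le fun i => iSup_le fun a => ?_
      rw [ih i]
      exact consD_map_le S u m i j a
    · refine le_trans (consD_le_iSup S u m j) ?_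
      refine iSup_mono fun i => iSup_mono fun a => ?_
      rw [ih i]

lemma consD_finrank (m : ℕ) (i : Fin n) :
    Module.finrank K ↥(consD (K := K) S m i) =
      ∑ l : Fin (L + 1), if m ≤ (l : ℕ) then S l i else 0 := by
  classical
  have hT : LinearIndependent K
      (fun c : {c : Fin (∑ l, S l i) // m ≤ ((((consE S i).symm c).1 : ℕ))} =>
        (Pi.single (c : Fin (∑ l, S l i)) (1 : K) : Fin (∑ l, S l i) → K)) := by
    have h1 := (Pi.basisFun K (Fin (∑ l, S l i))).linearIndependent
    have h2 := h1.comp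
      (fun c : {c : Fin (∑ l, S l i) // m ≤ ((((consE S i).symm c).1 : ℕ))} => (c : Fin _))
      Subtype.val_injective
    convert h2 using 2 with c
    simp [Function.comp]
  have hspan : consD (K := K) S m i = Submodule.span K (Set.range
      (fun c : {c : Fin (∑ l, S l i) // m ≤ ((((consE S i).symm c).1 : ℕ))} =>
        (Pi.single (c : Fin (∑ l, S l i)) (1 : K) : Fin (∑ l, S l i) → K))) := by
    rw [consD, Set.image_eq_range]
    rfl
  rw [hspan, finrank_span_eq_card hT]
  -- count
  have e : {c : Fin (∑ l, S l i) // m ≤ ((((consE S i).symm c).1 : ℕ))} ≃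
      {p : Σ l : Fin (L + 1), Fin (S l i) // m ≤ ((p.1 : ℕ))} :=
    Equiv.subtypeEquiv (consE S i).symm fun c => Iff.rfl
  rw [Fintype.card_congr e, Fintype.card_subtype]
  rw [Finset.card_filter]
  rw [← Finset.univ_sigma_univ, Finset.sum_sigma]
  refine Finset.sum_congr rfl fun l _ => ?_
  split_ifs with h
  · simp
  · simp
end Cons3
section Cons4

variable {K : Type*} [Field K] {n L : ℕ} {B : Fin n → Fin n → ℕ}
variable (S : Fin (L + 1) → Fin n → ℕ)
variable (u : ∀ (l : Fin L) (j : Fin n),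
  Fin (S l.succ j) ↪ Σ i : Fin n, Fin (B i j) × Fin (S l.castSucc i))

lemma consX_path {i j : Fin n} (p : QPath B i j) (m : ℕ) :
    Submodule.map (Matrix.mulVecLin (evalPath (consX (K := K) S u) p)) (consD S m i) ≤
      consD S (m + QPath.length p) j := by
  induction p generalizing m with
  | nil =>
    simp only [evalPath, Matrix.mulVecLin_one, Submodule.map_id]
    exact consD_mono S (by simp [QPath.length]) _
  | cons p a ih =>
    rename_i i' j' k'
    simp only [evalPath, Matrix.mulVecLin_mul, Submodule.map_comp]
    refine le_trans (Submodule.map_mono (ih m)) ?_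
    refine le_trans (consD_map_le S u _ _ _ a) (consD_mono S ?_ k')
    simp [QPath.length]
    omega

lemma consX_trunc : InRepTrunc L (consX (K := K) S u) := by
  intro i j p hp
  have h1 := consX_path (K := K) S u p 0
  rw [hp, consD_zero (K := K) S i, consD_bot (K := K) S (m := 0 + (L + 1)) (by omega) j] at h1
  have h0 : ∀ v, Matrix.mulVecLin (evalPath (consX (K := K) S u) p) v = 0 := by
    intro v
    have : Matrix.mulVecLin (evalPath (consX (K := K) S u) p) v ∈
        (⊥ : Submodule K (Fin (∑ l, S l j) → K)) := h1 ⟨v, trivial, rfl⟩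
    exact (Submodule.mem_bot K).mp this
  ext r c
  have h2 := congrFun (h0 (Pi.single c 1)) r
  rw [Matrix.mulVecLin_apply, Matrix.mulVec_single] at h2
  simpa using h2

theorem realizable_of_numeric (h : ∀ (l : Fin L) (j : Fin n),
    S l.succ j ≤ ∑ i, B i j * S l.castSucc i) : Realizable K L B S := by
  classical
  have hcard : ∀ (l : Fin L) (j : Fin n), Fintype.card (Fin (S l.succ j)) ≤
      Fintype.card (Σ i : Fin n, Fin (B i j) × Fin (S l.castSucc i)) := by
    intro l j
    calc Fintype.card (Fin (S l.succ j)) = S l.succ j := Fintype.card_fin _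
      _ ≤ ∑ i, B i j * S l.castSucc i := h l j
      _ = ∑ i, Fintype.card (Fin (B i j) × Fin (S l.castSucc i)) := by
          refine Finset.sum_congr rfl fun i _ => ?_
          rw [Fintype.card_prod, Fintype.card_fin, Fintype.card_fin]
      _ = Fintype.card (Σ i : Fin n, Fin (B i j) × Fin (S l.castSucc i)) :=
          Fintype.card_sigma.symm
  let u : ∀ (l : Fin L) (j : Fin n),
      Fin (S l.succ j) ↪ Σ i : Fin n, Fin (B i j) × Fin (S l.castSucc i) :=
    fun l j => (Function.Embedding.nonempty_of_card_le (hcard l j)).some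
  refine ⟨consX (K := K) S u, consX_trunc S u, ?_, ?_⟩
  · intro i
    rw [consRadSer, consD_bot S le_rfl]
  · intro l i
    rw [consRadSer, consD_finrank]
    have hIci : Finset.Ici l = Finset.univ.filter (fun m : Fin (L + 1) => (l : ℕ) ≤ (m : ℕ)) := by
      ext m
      simp only [Finset.mem_Ici, Finset.mem_filter, Finset.mem_univ, true_and, Fin.le_def]
    rw [hIci, Finset.sum_filter]

end Cons4

/-- For a truncated path algebra `Λ = KQ/⟨paths of length L+1⟩`, a semisimple
sequence `(S_0, …, S_L)` is realizable if and only if each two-term sequence `(S_l, S_(l+1))`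
is realizable over `Λ/J²` (the truncated path algebra of Loewy length `2` on the same quiver)
for every `0 ≤ l ≤ L - 1`. -/
theorem truncated_realizability_two_term
    {K : Type*} [Field K] [IsAlgClosed K] {n : ℕ} (L : ℕ) (B : Fin n → Fin n → ℕ)
    (S : Fin (L + 1) → Fin n → ℕ) :
    Realizable K L B S ↔ ∀ l : Fin L, Realizable K 1 B ![S l.castSucc, S l.succ] := by
  constructor
  · intro h l
    have hnum := numeric_of_realizable h l
    refine realizable_of_numeric (L := 1) _ ?_
    intro l' j
    have hl' : l' = 0 := Subsingleton.elim _ _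
    subst hl'
    simpa using hnum j
  · intro h
    refine realizable_of_numeric _ ?_
    intro l j
    have := numeric_of_realizable (h l) 0 j
    simpa using this
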